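/- Let 1/2 < H < 1 and define γ_H(k) = (1/2)|k+1|^{2H} + (1/2)|k−1|^{2H} − |k|^{2H} for k ∈ ℤ. Then for every k ∈ ℤ with k ≠ 0: 0 < γ_H(k) ≤ |k|^{−2(1−H)}. -/

import Mathlib

noncomputable def gammaH (H : ℝ) (k : ℤ) : ℝ :=
  (1 / 2) * |((k + 1 : ℤ) : ℝ)| ^ (2 * H) + (1 / 2) * |((k - 1 : ℤ) : ℝ)| ^ (2 * H)
    - |(k : ℝ)| ^ (2 * H)

/-- Key scalar inequality: for `1 < a < 2` and `0 ≤ x ≤ 1`,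
`(1+x)^a + (1-x)^a ≤ 2 + 2x²`. -/
lemma key_ineq {a x : ℝ} (ha1 : 1 < a) (ha2 : a < 2) (hx0 : 0 ≤ x) (hx1 : x ≤ 1) :
    (1 + x) ^ a + (1 - x) ^ a ≤ 2 + 2 * x ^ 2 := by
  have hb1 : (0:ℝ) ≤ 1 + x := by linarith
  have hb2 : (0:ℝ) ≤ 1 - x := by linarith
  set C : ℝ := 2 + 2 * x ^ 2 with hC
  have hCpos : 0 < C := by positivity
  have hw1 : (0:ℝ) ≤ 2 - a := by linarith
  have hw2 : (0:ℝ) ≤ a - 1 := by linarith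
  -- per-term Hölder via weighted AM-GM
  have hterm : ∀ b : ℝ, 0 ≤ b →
      b ^ a ≤ (2:ℝ) ^ (2 - a) * C ^ (a - 1) * ((2 - a) * (b / 2) + (a - 1) * (b ^ 2 / C)) := by
    intro b hb
    have h1 : b ^ a = (b / 2) ^ (2 - a) * (b ^ 2 / C) ^ (a - 1)
        * ((2:ℝ) ^ (2 - a) * C ^ (a - 1)) := by
      rw [Real.div_rpow hb (by norm_num), Real.div_rpow (by positivity) hCpos.le]
      have hb2a : b ^ a = b ^ (2 - a) * (b ^ 2) ^ (a - 1) := by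
        rw [← Real.rpow_natCast b 2, ← Real.rpow_mul hb]
        rw [← Real.rpow_add_of_nonneg hb hw1 (by positivity)]
        congr 1; ring
      rw [hb2a]
      have h2 : (0:ℝ) < 2 ^ (2 - a) := by positivity
      have h3 : (0:ℝ) < C ^ (a - 1) := Real.rpow_pos_of_pos hCpos _
      field_simp
    rw [h1, mul_comm ((2:ℝ) ^ (2-a) * C ^ (a-1)) _]
    exact mul_le_mul_of_nonneg_right
      (Real.geom_mean_le_arith_mean2_weighted hw1 hw2 (by positivity) (by positivity)
        (by ring)) (by positivity)
  have t1 := hterm (1 + x) hb1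
  have t2 := hterm (1 - x) hb2
  have hsum : (1 + x) ^ a + (1 - x) ^ a ≤ (2:ℝ) ^ (2 - a) * C ^ (a - 1) := by
    calc (1 + x) ^ a + (1 - x) ^ a
        ≤ (2:ℝ) ^ (2 - a) * C ^ (a - 1) *
            ((2 - a) * ((1 + x) / 2) + (a - 1) * ((1 + x) ^ 2 / C)
              + ((2 - a) * ((1 - x) / 2) + (a - 1) * ((1 - x) ^ 2 / C))) := by
          rw [mul_add]; exact add_le_add t1 t2
      _ = (2:ℝ) ^ (2 - a) * C ^ (a - 1) := by
          have : (2 - a) * ((1 + x) / 2) + (a - 1) * ((1 + x) ^ 2 / C)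
              + ((2 - a) * ((1 - x) / 2) + (a - 1) * ((1 - x) ^ 2 / C)) = 1 := by
            have h12 : (1 + x) ^ 2 / C + (1 - x) ^ 2 / C = 1 := by
              field_simp; ring
            nlinarith [h12]
          rw [this, mul_one]
  -- now `2^{2-a} C^{a-1} = 2 (1+x²)^{a-1} ≤ 2 (1+x²) = C`
  have hfac : (2:ℝ) ^ (2 - a) * C ^ (a - 1) ≤ C := by
    have hCeq : C = 2 * (1 + x ^ 2) := by rw [hC]; ring
    have h1x : (0:ℝ) ≤ 1 + x ^ 2 := by positivity
    rw [hCeq, Real.mul_rpow (by norm_num) h1x, ← mul_assoc,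
      ← Real.rpow_add_of_nonneg (by norm_num) hw1 hw2]
    norm_num
    have : (1 + x ^ 2) ^ (a - 1) ≤ (1 + x ^ 2) ^ (1:ℝ) :=
      Real.rpow_le_rpow_of_exponent_le (by nlinarith) (by linarith)
    rw [Real.rpow_one] at this
    linarith
  linarith

/-- Core real lemma for `n ≥ 1`. -/
lemma core (H : ℝ) (hH0 : 1 / 2 < H) (hH1 : H < 1) (n : ℝ) (hn : 1 ≤ n) :
    0 < (1/2) * (n+1) ^ (2*H) + (1/2) * (n-1) ^ (2*H) - n ^ (2*H) ∧
      (1/2) * (n+1) ^ (2*H) + (1/2) * (n-1) ^ (2*H) - n ^ (2*H) ≤ n ^ (2*H - 2) := by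
  have hn0 : (0:ℝ) < n := by linarith
  set a : ℝ := 2 * H with ha
  have ha1 : 1 < a := by rw [ha]; linarith
  have ha2 : a < 2 := by rw [ha]; linarith
  constructor
  · -- strict convexity
    have hsc := strictConvexOn_rpow ha1
    have := hsc.2 (show (n-1) ∈ Set.Ici (0:ℝ) by simp; linarith)
      (show (n+1) ∈ Set.Ici (0:ℝ) by simp; linarith)
      (by intro h; linarith [h]) (by norm_num : (0:ℝ) < 1/2) (by norm_num : (0:ℝ) < 1/2)
      (by norm_num)
    simp only [smul_eq_mul] at this
    have heq : (1/2 : ℝ) * (n - 1) + (1/2) * (n + 1) = n := by ring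
    rw [heq] at this
    linarith
  · -- upper bound via key_ineq with x = 1/n
    have hx0 : (0:ℝ) ≤ 1 / n := by positivity
    have hx1 : (1:ℝ) / n ≤ 1 := by rw [div_le_one hn0]; exact hn
    have hkey := key_ineq ha1 ha2 hx0 hx1
    have hmul : n ^ a * ((1 + 1/n) ^ a + (1 - 1/n) ^ a) ≤ n ^ a * (2 + 2 * (1/n) ^ 2) :=
      mul_le_mul_of_nonneg_left hkey (by positivity)
    have e1 : n ^ a * (1 + 1/n) ^ a = (n + 1) ^ a := by
      rw [← Real.mul_rpow hn0.le (by positivity)]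
      congr 1; field_simp
    have e2 : n ^ a * (1 - 1/n) ^ a = (n - 1) ^ a := by
      rw [← Real.mul_rpow hn0.le (by linarith)]
      congr 1; field_simp
    have e3 : n ^ a * (2 + 2 * (1/n) ^ 2) = 2 * n ^ a + 2 * n ^ (a - 2) := by
      have h2 : n ^ (a - 2) = n ^ a / n ^ 2 := by
        rw [← Real.rpow_natCast n 2, ← Real.rpow_sub hn0]
        norm_num
      rw [h2]; field_simp
    rw [mul_add, e1, e2, e3] at hmul
    linarith

/-- For `1/2 < H < 1` and every nonzero `k ∈ ℤ`,
`0 < γ_H(k) ≤ |k|^{−2(1−H)}`. -/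
theorem stmt11 (H : ℝ) (hH0 : 1 / 2 < H) (hH1 : H < 1) :
    ∀ k : ℤ, k ≠ 0 → 0 < gammaH H k ∧ gammaH H k ≤ |(k : ℝ)| ^ (-(2 * (1 - H))) := by
  intro k hk
  have hexp : -(2 * (1 - H)) = 2 * H - 2 := by ring
  rw [hexp]
  rcases lt_or_gt_of_ne hk with hneg | hpos
  · -- k ≤ -1
    have hk1 : k ≤ -1 := by omega
    have hn : (1:ℝ) ≤ -(k:ℝ) := by
      have : (k:ℝ) ≤ -1 := by exact_mod_cast hk1
      linarith
    have h := core H hH0 hH1 (-(k:ℝ)) hn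
    have e1 : |((k + 1 : ℤ) : ℝ)| = -(k:ℝ) - 1 := by
      rw [abs_of_nonpos (by push_cast; linarith)]; push_cast; ring
    have e2 : |((k - 1 : ℤ) : ℝ)| = -(k:ℝ) + 1 := by
      rw [abs_of_nonpos (by push_cast; linarith)]; push_cast; ring
    have e3 : |(k:ℝ)| = -(k:ℝ) := abs_of_nonpos (by linarith)
    unfold gammaH
    rw [e1, e2, e3]
    constructor <;> linarith [h.1, h.2]
  · -- k ≥ 1
    have hk1 : 1 ≤ k := hpos
    have hn : (1:ℝ) ≤ (k:ℝ) := by exact_mod_cast hk1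
    have h := core H hH0 hH1 (k:ℝ) hn
    have e1 : |((k + 1 : ℤ) : ℝ)| = (k:ℝ) + 1 := by
      rw [abs_of_nonneg (by push_cast; linarith)]; push_cast; ring
    have e2 : |((k - 1 : ℤ) : ℝ)| = (k:ℝ) - 1 := by
      rw [abs_of_nonneg (by push_cast; linarith)]; push_cast; ring
    have e3 : |(k:ℝ)| = (k:ℝ) := abs_of_nonneg (by linarith)
    unfold gammaH
    rw [e1, e2, e3]
    constructor <;> linarith [h.1, h.2]
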